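/- For any graph G there is a partition V(G) = V₁ ∪ V₂ such that |V₁| = 2α'(G), the induced subgraph G[V₁] has a fractional perfect matching, and V₂ is empty or an independent set of G. -/

import Mathlib

open Finset
open scoped Classical

noncomputable section

/-- A fractional matching of a simple graph `G`: a weight on `Sym2 V` supported on the
edge set, with values in `[0,1]`, such that the total weight at each vertex is at most 1. -/
def SimpleGraph.IsFracMatching {V : Type*} [Fintype V] (G : SimpleGraph V)
    (f : Sym2 V → ℝ) : Prop :=
  (∀ e, 0 ≤ f e ∧ f e ≤ 1) ∧ (∀ e, e ∉ G.edgeSet → f e = 0) ∧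
    ∀ v : V, ∑ e ∈ G.incidenceFinset v, f e ≤ 1

/-- The total weight `f(G)` of a fractional matching. -/
def SimpleGraph.fracWeight {V : Type*} [Fintype V] (G : SimpleGraph V)
    (f : Sym2 V → ℝ) : ℝ :=
  ∑ e ∈ G.edgeFinset, f e

/-- The weight `f(v)` of a vertex: the sum over edges incident to `v`. -/
def SimpleGraph.vertexWeight {V : Type*} [Fintype V] (G : SimpleGraph V)
    (f : Sym2 V → ℝ) (v : V) : ℝ :=
  ∑ e ∈ G.incidenceFinset v, f e

/-- The fractional matching number `α'(G)`. -/
def SimpleGraph.fracNu {V : Type*} [Fintype V] (G : SimpleGraph V) : ℝ :=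
  sSup {x : ℝ | ∃ f, G.IsFracMatching f ∧ G.fracWeight f = x}

end

noncomputable section

namespace FracAux

variable {V : Type*} [Fintype V] (G : SimpleGraph V)

/-- vertex weight of an arbitrary function -/
def Wt (f : Sym2 V → ℝ) (v : V) : ℝ := ∑ e ∈ G.incidenceFinset v, f e

lemma mem_inc_gen {V' : Type*} (G' : SimpleGraph V') {v : V'} [DecidableEq V']
    [Fintype (G'.neighborSet v)] {e : Sym2 V'} :
    e ∈ G'.incidenceFinset v ↔ e ∈ G'.edgeSet ∧ v ∈ e := by
  rw [SimpleGraph.mem_incidenceFinset]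
  exact Iff.rfl

lemma mem_inc {v : V} {e : Sym2 V} : e ∈ G.incidenceFinset v ↔ e ∈ G.edgeSet ∧ v ∈ e :=
  mem_inc_gen G

lemma Wt_add (f g : Sym2 V → ℝ) (v : V) : Wt G (fun e => f e + g e) v = Wt G f v + Wt G g v := by
  simp [Wt, Finset.sum_add_distrib]

lemma Wt_smul (c : ℝ) (f : Sym2 V → ℝ) (v : V) : Wt G (fun e => c * f e) v = c * Wt G f v := by
  simp [Wt, Finset.mul_sum]

lemma Wt_indicator (e₀ : Sym2 V) (c : ℝ) (he : e₀ ∈ G.edgeSet) (v : V) :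
    Wt G (fun e => if e = e₀ then c else 0) v = if v ∈ e₀ then c else 0 := by
  rw [Wt, Finset.sum_ite_eq' (G.incidenceFinset v) e₀ (fun _ => c)]
  have : e₀ ∈ G.incidenceSet v ↔ v ∈ e₀ := by
    constructor
    · exact fun h => h.2
    · exact fun h => ⟨he, h⟩
  by_cases h : v ∈ e₀ <;> simp [this, h]


variable {G}

lemma Wt_nonneg {f : Sym2 V → ℝ} (hf : ∀ e, 0 ≤ f e) (v : V) : 0 ≤ Wt G f v :=
  Finset.sum_nonneg fun e _ => hf e

lemma single_le_Wt {f : Sym2 V → ℝ} (hf : ∀ e, 0 ≤ f e) {v : V} {e : Sym2 V}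
    (he : e ∈ G.incidenceFinset v) : f e ≤ Wt G f v :=
  Finset.single_le_sum (fun e _ => hf e) he

lemma pos_mem_edgeSet {f : Sym2 V → ℝ} (hf : G.IsFracMatching f) {e : Sym2 V}
    (he : f e ≠ 0) : e ∈ G.edgeSet := by
  by_contra h
  exact he (hf.2.1 e h)

lemma vw_eq_Wt (f : Sym2 V → ℝ) (v : V) : G.vertexWeight f v = Wt G f v := rfl

lemma Wt_le_one {f : Sym2 V → ℝ} (hf : G.IsFracMatching f) (v : V) : Wt G f v ≤ 1 := hf.2.2 v

/-- sum over all of Sym2 V equals fracWeight for edge-supported functions -/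
lemma sum_univ_eq_fracWeight {f : Sym2 V → ℝ} (hs : ∀ e, f e ≠ 0 → e ∈ G.edgeSet) :
    ∑ e : Sym2 V, f e = G.fracWeight f := by
  rw [SimpleGraph.fracWeight]
  refine (Finset.sum_subset (Finset.subset_univ _) ?_).symm
  intro e _ he
  by_contra h
  exact he (by simpa [SimpleGraph.mem_edgeFinset] using hs e h)

/-- double counting: sum of vertex weights is twice the total weight -/
lemma sum_Wt_eq {f : Sym2 V → ℝ} (hs : ∀ e, f e ≠ 0 → e ∈ G.edgeSet) :
    ∑ v : V, Wt G f v = 2 * ∑ e : Sym2 V, f e := by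
  have h1 : ∀ v : V, Wt G f v = ∑ e : Sym2 V, if e ∈ G.incidenceFinset v then f e else 0 := by
    intro v
    rw [Wt, Finset.sum_ite_mem, Finset.univ_inter]
  simp_rw [h1]
  rw [Finset.sum_comm, Finset.mul_sum]
  refine Finset.sum_congr rfl fun e _ => ?_
  by_cases h : f e = 0
  · simp [h]
  · have hedge := hs e h
    obtain ⟨a, b⟩ := e
    have hadj : G.Adj a b := hedge
    have hne : a ≠ b := G.ne_of_adj hadj
    have : ∀ v : V, (s(a,b) ∈ G.incidenceFinset v) ↔ v ∈ ({a, b} : Finset V) := by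
      intro v
      rw [mem_inc]
      simp only [hedge, true_and, Sym2.mem_iff, Finset.mem_insert, Finset.mem_singleton]
    simp_rw [this]
    rw [Finset.sum_ite_mem, Finset.univ_inter, Finset.sum_const]
    rw [Finset.card_insert_of_notMem (by simp [hne]), Finset.card_singleton]
    ring


/-- support of a weight function -/
def supp (f : Sym2 V → ℝ) : Finset (Sym2 V) := Finset.univ.filter (fun e => f e ≠ 0)

/-- fractional vertices -/
def frv (G : SimpleGraph V) (f : Sym2 V → ℝ) : Finset V :=
  Finset.univ.filter (fun v => Wt G f v ≠ 0 ∧ Wt G f v ≠ 1)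

lemma perturb {f δ : Sym2 V → ℝ} (hf : G.IsFracMatching f)
    (h1 : ∀ e, δ e ≠ 0 → 0 < f e)
    (h2 : (∃ e, δ e < 0) ∨ (∃ v, 0 < Wt G δ v))
    (h3 : ∀ v, Wt G δ v ≠ 0 → Wt G f v ≠ 0 ∧ Wt G f v ≠ 1)
    (h4 : 0 ≤ ∑ e : Sym2 V, δ e) :
    ∃ g, G.IsFracMatching g ∧ G.fracWeight f ≤ G.fracWeight g ∧
      supp g ⊆ supp f ∧ frv G g ⊆ frv G f ∧ (supp g ⊂ supp f ∨ frv G g ⊂ frv G f) := by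
  have fnn : ∀ e, 0 ≤ f e := fun e => (hf.1 e).1
  have wnn : ∀ v, 0 ≤ Wt G f v := fun v => Wt_nonneg fnn v
  have wle : ∀ v, Wt G f v ≤ 1 := fun v => hf.2.2 v
  set S1 : Finset ℝ := (Finset.univ.filter fun e : Sym2 V => δ e < 0).image
    (fun e => f e / (-δ e)) with hS1
  set S2 : Finset ℝ := (Finset.univ.filter fun v : V => 0 < Wt G δ v).image
    (fun v => (1 - Wt G f v) / Wt G δ v) with hS2
  set S3 : Finset ℝ := (Finset.univ.filter fun v : V => Wt G δ v < 0).image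
    (fun v => Wt G f v / (-Wt G δ v)) with hS3
  set T : Finset ℝ := S1 ∪ S2 ∪ S3 with hT
  have hTne : T.Nonempty := by
    rcases h2 with ⟨e, he⟩ | ⟨v, hv⟩
    · exact ⟨f e / (-δ e), by
        simp only [hT, Finset.mem_union]
        exact Or.inl (Or.inl (Finset.mem_image.2 ⟨e, by simp [he], rfl⟩))⟩
    · exact ⟨(1 - Wt G f v) / Wt G δ v, by
        simp only [hT, Finset.mem_union]
        exact Or.inl (Or.inr (Finset.mem_image.2 ⟨v, by simp [hv], rfl⟩))⟩
  set ε : ℝ := T.min' hTne with hε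
  have hTpos : ∀ x ∈ T, 0 < x := by
    intro x hx
    simp only [hT, Finset.mem_union] at hx
    rcases hx with (hx | hx) | hx
    · obtain ⟨e, he, rfl⟩ := Finset.mem_image.1 hx
      simp only [Finset.mem_filter] at he
      have hδ : δ e < 0 := he.2
      have : 0 < f e := h1 e (ne_of_lt hδ)
      exact div_pos this (by linarith)
    · obtain ⟨v, hv, rfl⟩ := Finset.mem_image.1 hx
      simp only [Finset.mem_filter] at hv
      have h3v := h3 v (ne_of_gt hv.2)
      have : Wt G f v < 1 := lt_of_le_of_ne (wle v) h3v.2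
      exact div_pos (by linarith) hv.2
    · obtain ⟨v, hv, rfl⟩ := Finset.mem_image.1 hx
      simp only [Finset.mem_filter] at hv
      have h3v := h3 v (ne_of_lt hv.2)
      have : 0 < Wt G f v := lt_of_le_of_ne (wnn v) (Ne.symm h3v.1)
      exact div_pos this (by linarith)
  have hεpos : 0 < ε := hTpos _ (T.min'_mem hTne)
  have hεS1 : ∀ e, δ e < 0 → 0 ≤ f e + ε * δ e := by
    intro e he
    have hle : ε ≤ f e / (-δ e) := T.min'_le _ (by
      simp only [hT, Finset.mem_union]
      exact Or.inl (Or.inl (Finset.mem_image.2 ⟨e, by simp [he], rfl⟩)))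
    rw [le_div_iff₀ (by linarith : (0:ℝ) < -δ e)] at hle
    nlinarith
  set g : Sym2 V → ℝ := fun e => f e + ε * δ e with hg
  have gnn : ∀ e, 0 ≤ g e := by
    intro e
    rcases lt_or_ge (δ e) 0 with h | h
    · exact hεS1 e h
    · have : 0 ≤ ε * δ e := mul_nonneg hεpos.le h
      simp only [hg]; linarith [fnn e]
  have gWt : ∀ v, Wt G g v = Wt G f v + ε * Wt G δ v := by
    intro v
    simp only [hg]
    rw [show (fun e => f e + ε * δ e) = (fun e => f e + (fun e => ε * δ e) e) from rfl,
      Wt_add, Wt_smul]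
  have gWt_le : ∀ v, Wt G g v ≤ 1 := by
    intro v
    rw [gWt]
    rcases lt_or_ge 0 (Wt G δ v) with h | h
    · have hle : ε ≤ (1 - Wt G f v) / Wt G δ v := T.min'_le _ (by
        simp only [hT, Finset.mem_union]
        exact Or.inl (Or.inr (Finset.mem_image.2 ⟨v, by simp [h], rfl⟩)))
      rw [le_div_iff₀ h] at hle
      nlinarith
    · nlinarith [wle v, hεpos]
  have gWt_nn : ∀ v, 0 ≤ Wt G g v := fun v => Wt_nonneg gnn v
  have gsupp : ∀ e, g e ≠ 0 → e ∈ G.edgeSet := by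
    intro e he
    by_cases h : δ e = 0
    · apply pos_mem_edgeSet hf
      simp only [hg, h, mul_zero, add_zero] at he
      exact he
    · exact pos_mem_edgeSet hf (ne_of_gt (h1 e h))
  have gfm : G.IsFracMatching g := by
    refine ⟨fun e => ⟨gnn e, ?_⟩, fun e he => ?_, fun v => gWt_le v⟩
    · by_cases h : g e = 0
      · rw [h]; norm_num
      · have hedge := gsupp e h
        obtain ⟨a, b⟩ := e
        have : s(a, b) ∈ G.incidenceFinset a := (mem_inc G).2 ⟨hedge, by simp⟩
        exact le_trans (single_le_Wt gnn this) (gWt_le a)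
    · by_contra h
      exact he (gsupp e h)
  have hsuppsub : supp g ⊆ supp f := by
    intro e he
    simp only [supp, Finset.mem_filter, Finset.mem_univ, true_and] at he ⊢
    intro hfe
    apply he
    have hδ : δ e = 0 := by
      by_contra hδ
      exact absurd hfe (ne_of_gt (h1 e hδ))
    simp [hg, hδ, hfe]
  have hfrvsub : frv G g ⊆ frv G f := by
    intro v hv
    simp only [frv, Finset.mem_filter, Finset.mem_univ, true_and] at hv ⊢
    by_cases h : Wt G δ v = 0
    · rw [gWt, h, mul_zero, add_zero] at hv
      exact hv
    · exact h3 v h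
  have hweight : G.fracWeight f ≤ G.fracWeight g := by
    rw [← sum_univ_eq_fracWeight (fun e he => pos_mem_edgeSet hf he),
      ← sum_univ_eq_fracWeight gsupp]
    simp only [hg]
    rw [Finset.sum_add_distrib, ← Finset.mul_sum]
    nlinarith
  refine ⟨g, gfm, hweight, hsuppsub, hfrvsub, ?_⟩
  have hmem := T.min'_mem hTne
  simp only [hT, Finset.mem_union] at hmem
  rcases hmem with (hx | hx) | hx
  · left
    obtain ⟨e, he, heq⟩ := Finset.mem_image.1 hx
    simp only [Finset.mem_filter] at he
    have hδ : δ e < 0 := he.2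
    refine (Finset.ssubset_iff_of_subset hsuppsub).2 ⟨e, ?_, ?_⟩
    · simp only [supp, Finset.mem_filter, Finset.mem_univ, true_and]
      exact ne_of_gt (h1 e (ne_of_lt hδ))
    · simp only [supp, Finset.mem_filter, Finset.mem_univ, true_and, not_not]
      have hεeq : ε = f e / (-δ e) := heq.symm
      simp only [hg]
      rw [hεeq]
      have hne : δ e ≠ 0 := ne_of_lt hδ
      rw [div_mul_eq_mul_div, mul_div_assoc, div_neg, div_self hne]
      ring
  · right
    obtain ⟨v, hv, heq⟩ := Finset.mem_image.1 hx
    simp only [Finset.mem_filter] at hv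
    have hδ : 0 < Wt G δ v := hv.2
    refine (Finset.ssubset_iff_of_subset hfrvsub).2 ⟨v, ?_, ?_⟩
    · simp only [frv, Finset.mem_filter, Finset.mem_univ, true_and]
      exact h3 v (ne_of_gt hδ)
    · simp only [frv, Finset.mem_filter, Finset.mem_univ, true_and, not_and, not_not]
      intro _
      have hεeq : ε = (1 - Wt G f v) / Wt G δ v := heq.symm
      have hne : Wt G δ v ≠ 0 := ne_of_gt hδ
      rw [gWt, hεeq]
      field_simp
      ring
  · right
    obtain ⟨v, hv, heq⟩ := Finset.mem_image.1 hx
    simp only [Finset.mem_filter] at hv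
    have hδ : Wt G δ v < 0 := hv.2
    refine (Finset.ssubset_iff_of_subset hfrvsub).2 ⟨v, ?_, ?_⟩
    · simp only [frv, Finset.mem_filter, Finset.mem_univ, true_and]
      exact h3 v (ne_of_lt hδ)
    · simp only [frv, Finset.mem_filter, Finset.mem_univ, true_and]
      intro hcon
      exfalso
      apply hcon.1
      have hεeq : ε = Wt G f v / (-Wt G δ v) := heq.symm
      have hne : Wt G δ v ≠ 0 := ne_of_lt hδ
      rw [gWt, hεeq, div_mul_eq_mul_div, mul_div_assoc, div_neg, div_self hne]
      ring

/-- linear combination shape used for all perturbation directions -/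
def comb (Δ1 Δ2 : Sym2 V → ℝ) (c1 c2 c3 : ℝ) (e₀ : Sym2 V) : Sym2 V → ℝ :=
  fun e => c1 * Δ1 e + c2 * Δ2 e + (if e = e₀ then c3 else 0)

variable (G) in
lemma Wt_comb (Δ1 Δ2 : Sym2 V → ℝ) (c1 c2 c3 : ℝ) {e₀ : Sym2 V} (he : e₀ ∈ G.edgeSet) (v : V) :
    Wt G (comb Δ1 Δ2 c1 c2 c3 e₀) v
      = c1 * Wt G Δ1 v + c2 * Wt G Δ2 v + (if v ∈ e₀ then c3 else 0) := by
  have h0 : Wt G (comb Δ1 Δ2 c1 c2 c3 e₀) v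
      = Wt G (fun e => c1 * Δ1 e) v + Wt G (fun e => c2 * Δ2 e) v
        + Wt G (fun e => if e = e₀ then c3 else 0) v := by
    simp [comb, Wt, Finset.sum_add_distrib]
  rw [h0, Wt_smul, Wt_smul, Wt_indicator G e₀ c3 he]

lemma sum_comb (Δ1 Δ2 : Sym2 V → ℝ) (c1 c2 c3 : ℝ) (e₀ : Sym2 V) :
    ∑ e : Sym2 V, comb Δ1 Δ2 c1 c2 c3 e₀ e
      = c1 * ∑ e : Sym2 V, Δ1 e + c2 * ∑ e : Sym2 V, Δ2 e + c3 := by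
  simp [comb, Finset.sum_add_distrib, ← Finset.mul_sum, Finset.sum_ite_eq']

/-- invariant for suffix perturbations along the alternating walk -/
def PP (G : SimpleGraph V) (f : Sym2 V → ℝ) (x : V) (L : List V) (el : Sym2 V)
    (D : Sym2 V → ℝ) (v : V) : Prop :=
  (∀ e, D e ≠ 0 → 0 < f e ∧ ∀ z ∈ e, z ∈ L) ∧
  (∀ z, z ≠ v → z ≠ x → Wt G D z = 0) ∧
  Wt G D x = 1 ∧ (Wt G D v = 1 ∨ Wt G D v = -1) ∧ D el = 1 ∧
  2 * ∑ e : Sym2 V, D e = Wt G D v + 1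

/-- the conclusion: a good perturbation direction exists -/
def GoodDir (G : SimpleGraph V) (f : Sym2 V → ℝ) : Prop :=
  ∃ δ : Sym2 V → ℝ, (∀ e, δ e ≠ 0 → 0 < f e) ∧
    ((∃ e, δ e < 0) ∨ (∃ v, 0 < Wt G δ v)) ∧
    (∀ v, Wt G δ v ≠ 0 → Wt G f v ≠ 0 ∧ Wt G f v ≠ 1) ∧
    0 ≤ ∑ e : Sym2 V, δ e

lemma mem_pair {x y z : V} : z ∈ s(x, y) ↔ z = x ∨ z = y := Sym2.mem_iff

/-- closing the walk at a vertex with its own suffix perturbation -/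
lemma close_core {f : Sym2 V → ℝ} {x y : V} {Dy : Sym2 V → ℝ} {el : Sym2 V}
    (hadj : G.Adj x y)
    (hsupp : ∀ e, Dy e ≠ 0 → 0 < f e)
    (hzero : ∀ z, z ≠ y → z ≠ x → Wt G Dy z = 0)
    (hWx : Wt G Dy x = 1)
    (ha : Wt G Dy y = 1 ∨ Wt G Dy y = -1)
    (hel : Dy el = 1) (hne' : el ≠ s(x, y))
    (hsum : 2 * ∑ e : Sym2 V, Dy e = Wt G Dy y + 1)
    (hfe' : 0 < f s(x, y))
    (hfracy : Wt G Dy y = -1 → Wt G f y ≠ 0 ∧ Wt G f y ≠ 1) :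
    GoodDir G f := by
  have hedge : s(x, y) ∈ G.edgeSet := hadj
  have hyx : y ≠ x := (G.ne_of_adj hadj).symm
  set δ := comb Dy Dy (-1) 0 1 s(x, y) with hδ
  have hW : ∀ z, Wt G δ z = -1 * Wt G Dy z + (if z ∈ s(x, y) then 1 else 0) := by
    intro z
    rw [hδ, Wt_comb G _ _ _ _ _ hedge]
    ring
  have hWy : Wt G δ y = 1 - Wt G Dy y := by
    rw [hW]; simp [mem_pair]; ring
  have hWx0 : Wt G δ x = 0 := by
    rw [hW, hWx]; simp [mem_pair]
  have hWz : ∀ z, z ≠ y → z ≠ x → Wt G δ z = 0 := by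
    intro z hzy hzx
    rw [hW, hzero z hzy hzx]
    simp [mem_pair, hzy, hzx]
  refine ⟨δ, ?_, ?_, ?_, ?_⟩
  · intro e he
    by_cases h : Dy e = 0
    · by_cases h2 : e = s(x, y)
      · rwa [h2]
      · exfalso; apply he; simp [hδ, comb, h, h2]
    · exact hsupp e h
  · rcases ha with haY | haY
    · left
      refine ⟨el, ?_⟩
      have : δ el = -1 := by simp [hδ, comb, hel, hne']
      rw [this]; norm_num
    · right
      exact ⟨y, by rw [hWy, haY]; norm_num⟩
  · intro z hz
    by_cases hzy : z = y
    · subst hzy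
      rw [hWy] at hz
      rcases ha with haY | haY
      · exact absurd (by rw [haY]; ring) hz
      · exact hfracy haY
    · by_cases hzx : z = x
      · exact absurd (hzx ▸ hWx0) hz
      · exact absurd (hWz z hzy hzx) hz
  · have : ∑ e : Sym2 V, δ e = -1 * ∑ e : Sym2 V, Dy e + 0 * ∑ e : Sym2 V, Dy e + 1 := by
      rw [hδ, sum_comb]
    rcases ha with haY | haY <;> rw [haY] at hsum <;> linarith

/-- closing the walk at an interior saturated vertex whose suffix has endpoint value -1 -/
lemma caseB_core {f : Sym2 V → ℝ} {x y u : V} {Du Dy : Sym2 V → ℝ}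
    (hadj : G.Adj x y)
    (huy : u ≠ y) (hux : u ≠ x)
    (hUsupp : ∀ e, Du e ≠ 0 → 0 < f e)
    (hUzero : ∀ z, z ≠ u → z ≠ x → Wt G Du z = 0)
    (hUx : Wt G Du x = 1)
    (hUa : Wt G Du u = 1 ∨ Wt G Du u = -1)
    (hUsum : 2 * ∑ e : Sym2 V, Du e = Wt G Du u + 1)
    (hYsupp : ∀ e, Dy e ≠ 0 → 0 < f e)
    (hYzero : ∀ z, z ≠ y → z ≠ x → Wt G Dy z = 0)
    (hYx : Wt G Dy x = 1)
    (hYa : Wt G Dy y = -1)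
    (hYsum : 2 * ∑ e : Sym2 V, Dy e = Wt G Dy y + 1)
    (hfe' : 0 < f s(x, y))
    (hu : Wt G f u ≠ 0 ∧ Wt G f u ≠ 1) :
    GoodDir G f := by
  have hedge : s(x, y) ∈ G.edgeSet := hadj
  have hyx : y ≠ x := (G.ne_of_adj hadj).symm
  set a := Wt G Du u with haa
  have ha2 : a * a = 1 := by rcases hUa with h | h <;> rw [h] <;> norm_num
  set δ := comb Du Dy (2 * a) (-a) (-a) s(x, y) with hδ
  have hW : ∀ z, Wt G δ z = 2 * a * Wt G Du z + (-a) * Wt G Dy z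
      + (if z ∈ s(x, y) then -a else 0) := by
    intro z
    rw [hδ, Wt_comb G _ _ _ _ _ hedge]
  have hWu : Wt G δ u = 2 := by
    rw [hW, hYzero u huy hux]
    simp only [mem_pair, hux, huy, or_self, if_false]
    linear_combination 2 * ha2
  have hWx0 : Wt G δ x = 0 := by
    rw [hW, hUx, hYx]
    simp only [mem_pair, true_or, if_true]
    ring
  have hWy0 : Wt G δ y = 0 := by
    rw [hW, hYa, hUzero y (Ne.symm huy) hyx]
    simp only [mem_pair, or_true, if_true]
    ring
  have hWz : ∀ z, z ≠ u → z ≠ x → z ≠ y → Wt G δ z = 0 := by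
    intro z hzu hzx hzy
    rw [hW, hUzero z hzu hzx, hYzero z hzy hzx]
    simp [mem_pair, hzx, hzy]
  refine ⟨δ, ?_, Or.inr ⟨u, by rw [hWu]; norm_num⟩, ?_, ?_⟩
  · intro e he
    by_cases h2 : e = s(x, y)
    · rwa [h2]
    · by_cases hDu : Du e = 0
      · by_cases hDy : Dy e = 0
        · exfalso; apply he; simp [hδ, comb, hDu, hDy, h2]
        · exact hYsupp e hDy
      · exact hUsupp e hDu
  · intro z hz
    by_cases hzu : z = u
    · subst hzu; exact hu
    · by_cases hzx : z = x
      · exact absurd (hzx ▸ hWx0) hz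
      · by_cases hzy : z = y
        · exact absurd (hzy ▸ hWy0) hz
        · exact absurd (hWz z hzu hzx hzy) hz
  · have hs : ∑ e : Sym2 V, δ e
        = 2 * a * ∑ e : Sym2 V, Du e + (-a) * ∑ e : Sym2 V, Dy e + (-a) := by
      rw [hδ, sum_comb]
    have h2' : ∑ e : Sym2 V, Dy e = 0 := by rw [hYa] at hYsum; linarith
    have : ∑ e : Sym2 V, δ e = 1 := by
      rw [hs]
      linear_combination a * hUsum - a * h2' + ha2
    rw [this]; norm_num

/-- reaching a fresh fractional vertex -/
lemma fresh_core {f : Sym2 V → ℝ} {x y u : V} {Du : Sym2 V → ℝ}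
    (hadj : G.Adj x y)
    (huy : u ≠ y) (hux : u ≠ x)
    (hUsupp : ∀ e, Du e ≠ 0 → 0 < f e)
    (hUzero : ∀ z, z ≠ u → z ≠ x → Wt G Du z = 0)
    (hUx : Wt G Du x = 1)
    (hUa : Wt G Du u = 1 ∨ Wt G Du u = -1)
    (hUsum : 2 * ∑ e : Sym2 V, Du e = Wt G Du u + 1)
    (hfe' : 0 < f s(x, y))
    (hu : Wt G f u ≠ 0 ∧ Wt G f u ≠ 1)
    (hy : Wt G f y ≠ 0 ∧ Wt G f y ≠ 1) :
    GoodDir G f := by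
  have hedge : s(x, y) ∈ G.edgeSet := hadj
  have hyx : y ≠ x := (G.ne_of_adj hadj).symm
  set δ := comb Du Du (-1) 0 1 s(x, y) with hδ
  have hW : ∀ z, Wt G δ z = -1 * Wt G Du z + (if z ∈ s(x, y) then 1 else 0) := by
    intro z
    rw [hδ, Wt_comb G _ _ _ _ _ hedge]
    ring
  have hWy : Wt G δ y = 1 := by
    rw [hW, hUzero y (Ne.symm huy) hyx]
    simp [mem_pair]
  have hWx0 : Wt G δ x = 0 := by
    rw [hW, hUx]; simp [mem_pair]
  have hWu : Wt G δ u = -Wt G Du u := by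
    rw [hW]
    simp [mem_pair, hux, huy]
  have hWz : ∀ z, z ≠ u → z ≠ x → z ≠ y → Wt G δ z = 0 := by
    intro z hzu hzx hzy
    rw [hW, hUzero z hzu hzx]
    simp [mem_pair, hzx, hzy]
  refine ⟨δ, ?_, Or.inr ⟨y, by rw [hWy]; norm_num⟩, ?_, ?_⟩
  · intro e he
    by_cases h2 : e = s(x, y)
    · rwa [h2]
    · by_cases hDu : Du e = 0
      · exfalso; apply he; simp [hδ, comb, hDu, h2]
      · exact hUsupp e hDu
  · intro z hz
    by_cases hzu : z = u
    · subst hzu; exact hu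
    · by_cases hzy : z = y
      · subst hzy; exact hy
      · by_cases hzx : z = x
        · exact absurd (hzx ▸ hWx0) hz
        · exact absurd (hWz z hzu hzx hzy) hz
  · have hs : ∑ e : Sym2 V, δ e
        = -1 * ∑ e : Sym2 V, Du e + 0 * ∑ e : Sym2 V, Du e + 1 := by
      rw [hδ, sum_comb]
    rcases hUa with h | h <;> rw [h] at hUsum <;> linarith

lemma next_edge {f : Sym2 V → ℝ} (hf : G.IsFracMatching f) {x : V} {el : Sym2 V}
    (hx : Wt G f x = 1) (hel : el ∈ G.incidenceFinset x) (helpos : 0 < f el) (hlt : f el < 1) :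
    ∃ y, G.Adj x y ∧ 0 < f s(x, y) ∧ el ≠ s(x, y) ∧ f s(x, y) < 1 := by
  have fnn : ∀ e, 0 ≤ f e := fun e => (hf.1 e).1
  have hex : ∃ e' ∈ G.incidenceFinset x, e' ≠ el ∧ 0 < f e' := by
    by_contra h
    push_neg at h
    have heq : Wt G f x = f el := by
      rw [Wt]
      apply Finset.sum_eq_single_of_mem el hel
      intro e he hne
      exact le_antisymm (h e he hne) (fnn e)
    rw [hx] at heq
    linarith
  obtain ⟨e', he'inc, hne, hpos⟩ := hex
  rw [mem_inc] at he'inc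
  obtain ⟨hedge, hxmem⟩ := he'inc
  obtain ⟨y, rfl⟩ := Sym2.mem_iff_exists.1 hxmem
  have hadj : G.Adj x y := hedge
  have hsum2 : f el + f s(x, y) ≤ Wt G f x := by
    rw [Wt]
    have hsub : ({el, s(x, y)} : Finset (Sym2 V)) ⊆ G.incidenceFinset x := by
      intro e he
      rcases Finset.mem_insert.1 he with h | h
      · exact h ▸ hel
      · rw [Finset.mem_singleton.1 h, mem_inc]
        exact ⟨hedge, by simp⟩
    calc f el + f s(x, y) = ∑ e ∈ ({el, s(x, y)} : Finset (Sym2 V)), f e := by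
          rw [Finset.sum_pair (Ne.symm hne)]
      _ ≤ _ := Finset.sum_le_sum_of_subset_of_nonneg hsub (fun e _ _ => fnn e)
  exact ⟨y, hadj, hpos, Ne.symm hne, by rw [hx] at hsum2; linarith⟩

lemma close_branch {f : Sym2 V → ℝ} {u x y : V} {q : List V}
    {Δ : V → Sym2 V → ℝ} {el : Sym2 V}
    (hu : Wt G f u ≠ 0 ∧ Wt G f u ≠ 1)
    (hnd : (x :: q).Nodup) (huq : u ∈ q)
    (hPP : ∀ v ∈ q, PP G f x (x :: q) el (Δ v) v)
    (hadj : G.Adj x y) (hpos : 0 < f s(x, y)) (hne : el ≠ s(x, y))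
    (hymem : y ∈ x :: q) :
    GoodDir G f := by
  have hyx : y ≠ x := (G.ne_of_adj hadj).symm
  have hyq : y ∈ q := by
    rcases List.mem_cons.1 hymem with h | h
    · exact absurd h hyx
    · exact h
  have hxq : x ∉ q := (List.nodup_cons.1 hnd).1
  have hux : u ≠ x := fun h => hxq (h ▸ huq)
  obtain ⟨hYsupp, hYzero, hYx, hYa, hYel, hYsum⟩ := hPP y hyq
  have hYsupp' : ∀ e, Δ y e ≠ 0 → 0 < f e := fun e he => (hYsupp e he).1
  rcases hYa with haY | haY
  · exact close_core hadj hYsupp' hYzero hYx (Or.inl haY) hYel hne hYsum hpos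
      (fun hc => by rw [haY] at hc; norm_num at hc)
  · by_cases hyu : y = u
    · subst hyu
      exact close_core hadj hYsupp' hYzero hYx (Or.inr haY) hYel hne hYsum hpos (fun _ => hu)
    · obtain ⟨hUsupp, hUzero, hUx, hUa, hUel, hUsum⟩ := hPP u huq
      exact caseB_core hadj (fun h => hyu h.symm) hux
        (fun e he => (hUsupp e he).1) hUzero hUx hUa hUsum hYsupp' hYzero hYx haY hYsum hpos hu

lemma walk_aux {f : Sym2 V → ℝ} (hf : G.IsFracMatching f) {u : V}
    (hu : Wt G f u ≠ 0 ∧ Wt G f u ≠ 1) :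
    ∀ (n : ℕ) (x : V) (q : List V) (Δ : V → Sym2 V → ℝ) (el : Sym2 V),
      (x :: q).Nodup → u ∈ q → Wt G f x = 1 →
      el ∈ G.incidenceFinset x → 0 < f el → f el < 1 →
      (∀ v ∈ q, PP G f x (x :: q) el (Δ v) v) →
      Fintype.card V ≤ n + (x :: q).length →
      GoodDir G f := by
  have fnn : ∀ e, 0 ≤ f e := fun e => (hf.1 e).1
  intro n
  induction n with
  | zero =>
    intro x q Δ el hnd huq hwx helinc helpos hellt hPP hcard
    obtain ⟨y, hadj, hpos, hne, hlt⟩ := next_edge hf hwx helinc helpos hellt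
    by_cases hymem : y ∈ x :: q
    · exact close_branch hu hnd huq hPP hadj hpos hne hymem
    · exfalso
      have hnd' : (y :: x :: q).Nodup := List.nodup_cons.2 ⟨hymem, hnd⟩
      have := hnd'.length_le_card
      simp only [List.length_cons] at this hcard
      omega
  | succ n ih =>
    intro x q Δ el hnd huq hwx helinc helpos hellt hPP hcard
    obtain ⟨y, hadj, hpos, hne, hlt⟩ := next_edge hf hwx helinc helpos hellt
    by_cases hymem : y ∈ x :: q
    · exact close_branch hu hnd huq hPP hadj hpos hne hymem
    · have hyx : y ≠ x := (G.ne_of_adj hadj).symm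
      have hxq : x ∉ q := (List.nodup_cons.1 hnd).1
      have hux : u ≠ x := fun h => hxq (h ▸ huq)
      have huy : u ≠ y := fun h => hymem (h ▸ List.mem_cons_of_mem x huq)
      have hedge : s(x, y) ∈ G.edgeSet := hadj
      by_cases hyfrac : Wt G f y ≠ 0 ∧ Wt G f y ≠ 1
      · obtain ⟨hUsupp, hUzero, hUx, hUa, hUel, hUsum⟩ := hPP u huq
        exact fresh_core hadj huy hux (fun e he => (hUsupp e he).1) hUzero hUx hUa hUsum
          hpos hu hyfrac
      · -- continue the walk
        have hwy : Wt G f y = 1 := by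
          have h0 : 0 < Wt G f y := by
            have hmem : s(x, y) ∈ G.incidenceFinset y := (mem_inc G).2 ⟨hedge, by simp⟩
            exact lt_of_lt_of_le hpos (single_le_Wt fnn hmem)
          push_neg at hyfrac
          exact hyfrac (ne_of_gt h0)
        set Δ' : V → Sym2 V → ℝ :=
          fun v => comb (if v ∈ q then Δ v else fun _ => 0) (fun _ => 0) (-1) 0 1 s(x, y)
          with hΔ'
        have Wt0 : ∀ z, Wt G (fun _ : Sym2 V => (0:ℝ)) z = 0 := by
          intro z; simp [Wt]
        have hWδ : ∀ (D : Sym2 V → ℝ) (z : V),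
            Wt G (comb D (fun _ => 0) (-1) 0 1 s(x, y)) z
              = -(Wt G D z) + (if z ∈ s(x, y) then 1 else 0) := by
          intro D z
          rw [Wt_comb G _ _ _ _ _ hedge, Wt0]
          ring
        have hsumδ : ∀ D : Sym2 V → ℝ,
            ∑ e : Sym2 V, comb D (fun _ => 0) (-1) 0 1 s(x, y) e
              = -(∑ e : Sym2 V, D e) + 1 := by
          intro D
          rw [sum_comb]
          simp
        apply ih y (x :: q) Δ' s(x, y) (List.nodup_cons.2 ⟨hymem, hnd⟩)
          (List.mem_cons_of_mem x huq) hwy ((mem_inc G).2 ⟨hedge, by simp⟩) hpos hlt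
        · -- PP invariants
          intro v hv
          rcases List.mem_cons.1 hv with hvx | hvq
          · -- v = x : fresh indicator
            subst hvx
            have hD : Δ' v = comb (fun _ => 0) (fun _ => 0) (-1) 0 1 s(v, y) := by
              simp only [hΔ']
              rw [if_neg hxq]
            rw [hD]
            refine ⟨?_, ?_, ?_, ?_, ?_, ?_⟩
            · intro e he
              have he' : e = s(v, y) := by
                by_contra h
                apply he
                simp [comb, h]
              subst he'
              refine ⟨hpos, ?_⟩
              intro z hz
              rcases mem_pair.1 hz with h | h
              · subst h; simp
              · subst h; simp
            · intro z hzv hzy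
              rw [hWδ, Wt0]
              simp [mem_pair, hzv, hzy]
            · rw [hWδ, Wt0]
              simp [mem_pair]
            · left
              rw [hWδ, Wt0]
              simp [mem_pair]
            · simp [comb]
            · rw [hWδ, Wt0, hsumδ]
              simp [mem_pair]
              norm_num
          · -- v ∈ q
            obtain ⟨hVsupp, hVzero, hVx, hVa, hVel, hVsum⟩ := hPP v hvq
            have hvx : v ≠ x := fun h => hxq (h ▸ hvq)
            have hvy : v ≠ y := fun h => hymem (h ▸ List.mem_cons_of_mem x hvq)
            have hD : Δ' v = comb (Δ v) (fun _ => 0) (-1) 0 1 s(x, y) := by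
              simp only [hΔ']
              rw [if_pos hvq]
            rw [hD]
            have hVy : Wt G (Δ v) y = 0 := hVzero y (Ne.symm hvy) hyx
            refine ⟨?_, ?_, ?_, ?_, ?_, ?_⟩
            · intro e he
              by_cases h : Δ v e = 0
              · have he' : e = s(x, y) := by
                  by_contra h2
                  apply he
                  simp [comb, h, h2]
                subst he'
                refine ⟨hpos, ?_⟩
                intro z hz
                rcases mem_pair.1 hz with h | h
                · subst h; simp
                · subst h; simp
              · obtain ⟨h1, h2⟩ := hVsupp e h
                exact ⟨h1, fun z hz => List.mem_cons_of_mem y (h2 z hz)⟩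
            · intro z hzv hzy
              rw [hWδ]
              by_cases hzx : z = x
              · subst hzx
                rw [hVx]
                simp [mem_pair]
              · rw [hVzero z hzv hzx]
                simp [mem_pair, hzx, hzy]
            · rw [hWδ, hVy]
              simp [mem_pair]
            · have hite : (if v ∈ s(x, y) then (1:ℝ) else 0) = 0 := by
                simp [mem_pair, hvx, hvy]
              rcases hVa with h | h
              · right; rw [hWδ, h, hite]; ring
              · left; rw [hWδ, h, hite]; ring
            · have hva : Δ v s(x, y) = 0 := by
                by_contra h
                exact hymem ((hVsupp _ h).2 y (by simp))
              simp [comb, hva]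
            · have hite : (if v ∈ s(x, y) then (1:ℝ) else 0) = 0 := by
                simp [mem_pair, hvx, hvy]
              rw [hsumδ (Δ v), hWδ, hite]
              linarith [hVsum]
        · -- cardinality
          simp only [List.length_cons] at hcard ⊢
          omega

lemma exists_good_delta {f : Sym2 V → ℝ} (hf : G.IsFracMatching f) {u : V}
    (hu : Wt G f u ≠ 0 ∧ Wt G f u ≠ 1) :
    ∃ δ : Sym2 V → ℝ, (∀ e, δ e ≠ 0 → 0 < f e) ∧
      ((∃ e, δ e < 0) ∨ (∃ v, 0 < Wt G δ v)) ∧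
      (∀ v, Wt G δ v ≠ 0 → Wt G f v ≠ 0 ∧ Wt G f v ≠ 1) ∧
      0 ≤ ∑ e : Sym2 V, δ e := by
  have fnn : ∀ e, 0 ≤ f e := fun e => (hf.1 e).1
  have hwu_pos : 0 < Wt G f u := lt_of_le_of_ne (Wt_nonneg fnn u) (Ne.symm hu.1)
  have hwu_lt : Wt G f u < 1 := lt_of_le_of_ne (hf.2.2 u) hu.2
  have hex : ∃ e ∈ G.incidenceFinset u, 0 < f e := by
    by_contra h
    push_neg at h
    have : Wt G f u ≤ 0 := Finset.sum_nonpos (fun e he => h e he)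
    linarith
  obtain ⟨e₀, he₀inc, he₀pos⟩ := hex
  have he₀inc' := he₀inc
  rw [mem_inc] at he₀inc'
  obtain ⟨he₀edge, humem⟩ := he₀inc'
  obtain ⟨y, rfl⟩ := Sym2.mem_iff_exists.1 humem
  have hadj : G.Adj u y := he₀edge
  have huy : u ≠ y := G.ne_of_adj hadj
  by_cases hyfrac : Wt G f y ≠ 0 ∧ Wt G f y ≠ 1
  · -- both endpoints fractional: single edge perturbation
    refine ⟨comb (fun _ => 0) (fun _ => 0) 0 0 1 s(u, y), ?_, ?_, ?_, ?_⟩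
    · intro e he
      have he' : e = s(u, y) := by
        by_contra h
        apply he
        simp [comb, h]
      rwa [he']
    · right
      refine ⟨u, ?_⟩
      rw [Wt_comb G _ _ _ _ _ he₀edge]
      simp [mem_pair]
    · intro z hz
      rw [Wt_comb G _ _ _ _ _ he₀edge] at hz
      simp only [mul_zero, zero_mul, zero_add, mul_comm] at hz
      by_cases hzu : z = u
      · subst hzu; exact hu
      · by_cases hzy : z = y
        · subst hzy; exact hyfrac
        · exfalso
          apply hz
          simp [mem_pair, hzu, hzy]
    · rw [sum_comb]
      norm_num
  · -- start the alternating walk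
    have hwy : Wt G f y = 1 := by
      have h0 : 0 < Wt G f y := by
        have hmem : s(u, y) ∈ G.incidenceFinset y := (mem_inc G).2 ⟨he₀edge, by simp⟩
        exact lt_of_lt_of_le he₀pos (single_le_Wt fnn hmem)
      push_neg at hyfrac
      exact hyfrac (ne_of_gt h0)
    have hlt : f s(u, y) < 1 := lt_of_le_of_lt (single_le_Wt fnn he₀inc) hwu_lt
    exact walk_aux hf hu (Fintype.card V) y [u]
      (fun _ => comb (fun _ => 0) (fun _ => 0) 0 0 1 s(u, y)) s(u, y)
      (by simp [Ne.symm huy])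
      (by simp)
      hwy
      ((mem_inc G).2 ⟨he₀edge, by simp⟩)
      he₀pos hlt
      (by
        intro v hv
        have hvu : v = u := by simpa using hv
        subst hvu
        have hW : ∀ z, Wt G (comb (fun _ => (0:ℝ)) (fun _ => (0:ℝ)) 0 0 1 s(v, y)) z
            = (if z ∈ s(v, y) then (1:ℝ) else 0) := by
          intro z
          rw [Wt_comb G _ _ _ _ _ he₀edge]
          ring_nf
        refine ⟨?_, ?_, ?_, ?_, ?_, ?_⟩
        · intro e he
          have he' : e = s(v, y) := by
            by_contra h
            apply he
            simp [comb, h]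
          subst he'
          refine ⟨he₀pos, ?_⟩
          intro z hz
          rcases mem_pair.1 hz with h | h
          · subst h; simp
          · subst h; simp
        · intro z hzv hzy
          rw [hW]
          simp [mem_pair, hzv, hzy]
        · rw [hW]; simp [mem_pair]
        · left; rw [hW]; simp [mem_pair]
        · simp [comb]
        · rw [hW, sum_comb]
          simp [mem_pair]
          norm_num)
      (by simp)

lemma exists_integral_aux : ∀ (n : ℕ) (f : Sym2 V → ℝ), G.IsFracMatching f →
    (supp f).card * (Fintype.card V + 1) + (frv G f).card ≤ n →
    ∃ g, G.IsFracMatching g ∧ G.fracWeight f ≤ G.fracWeight g ∧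
      ∀ v, Wt G g v = 0 ∨ Wt G g v = 1 := by
  intro n
  induction n with
  | zero =>
    intro f hf hn
    refine ⟨f, hf, le_refl _, fun v => ?_⟩
    have hcard : (frv G f).card = 0 := by omega
    have hempty : frv G f = ∅ := Finset.card_eq_zero.1 hcard
    by_contra h
    push_neg at h
    have : v ∈ frv G f := by
      simp only [frv, Finset.mem_filter, Finset.mem_univ, true_and]
      exact h
    rw [hempty] at this
    exact absurd this (Finset.notMem_empty v)
  | succ n ih =>
    intro f hf hn
    by_cases hfr : frv G f = ∅
    · refine ⟨f, hf, le_refl _, fun v => ?_⟩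
      by_contra h
      push_neg at h
      have : v ∈ frv G f := by
        simp only [frv, Finset.mem_filter, Finset.mem_univ, true_and]
        exact h
      rw [hfr] at this
      exact absurd this (Finset.notMem_empty v)
    · obtain ⟨u, hu⟩ := Finset.nonempty_iff_ne_empty.2 hfr
      simp only [frv, Finset.mem_filter, Finset.mem_univ, true_and] at hu
      obtain ⟨δ, h1, h2, h3, h4⟩ := exists_good_delta hf hu
      obtain ⟨g, hg, hwle, hss, hfs, hstrict⟩ := perturb hf h1 h2 h3 h4
      have hmeas : (supp g).card * (Fintype.card V + 1) + (frv G g).card ≤ n := by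
        have hc1 : (supp g).card ≤ (supp f).card := Finset.card_le_card hss
        have hc2 : (frv G g).card ≤ (frv G f).card := Finset.card_le_card hfs
        have hc3 : (frv G g).card ≤ Fintype.card V := by
          rw [← Finset.card_univ]
          exact Finset.card_le_card (Finset.filter_subset _ _)
        rcases hstrict with h | h
        · have : (supp g).card < (supp f).card := Finset.card_lt_card h
          have h5 : ((supp g).card + 1) * (Fintype.card V + 1) ≤
              (supp f).card * (Fintype.card V + 1) :=
            Nat.mul_le_mul_right _ this
          nlinarith
        · have : (frv G g).card < (frv G f).card := Finset.card_lt_card h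
          have h5 : (supp g).card * (Fintype.card V + 1) ≤
              (supp f).card * (Fintype.card V + 1) :=
            Nat.mul_le_mul_right _ hc1
          omega
      obtain ⟨g', hg', hwle', hint⟩ := ih g hg hmeas
      exact ⟨g', hg', le_trans hwle hwle', hint⟩

lemma exists_integral {f : Sym2 V → ℝ} (hf : G.IsFracMatching f) :
    ∃ g, G.IsFracMatching g ∧ G.fracWeight f ≤ G.fracWeight g ∧
      ∀ v, Wt G g v = 0 ∨ Wt G g v = 1 :=
  exists_integral_aux _ f hf (le_refl _)

lemma integral_weight {f : Sym2 V → ℝ} (hf : G.IsFracMatching f)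
    (hint : ∀ v, Wt G f v = 0 ∨ Wt G f v = 1) :
    2 * G.fracWeight f = ((Finset.univ.filter fun v => Wt G f v = 1).card : ℝ) := by
  rw [← sum_univ_eq_fracWeight (fun e he => pos_mem_edgeSet hf he), ← sum_Wt_eq
    (fun e he => pos_mem_edgeSet hf he)]
  rw [← Finset.sum_filter_add_sum_filter_not Finset.univ (fun v => Wt G f v = 1)
    (fun v => Wt G f v)]
  have h1 : ∑ v ∈ Finset.univ.filter (fun v => Wt G f v = 1), Wt G f v
      = ((Finset.univ.filter fun v => Wt G f v = 1).card : ℝ) := by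
    rw [Finset.sum_congr rfl (fun v hv => (Finset.mem_filter.1 hv).2), Finset.sum_const,
      nsmul_eq_mul, mul_one]
  have h2 : ∑ v ∈ Finset.univ.filter (fun v => ¬ Wt G f v = 1), Wt G f v = 0 :=
    Finset.sum_eq_zero (fun v hv => (hint v).resolve_right (Finset.mem_filter.1 hv).2)
  rw [h1, h2, add_zero]

lemma weight_zero_edge {f : Sym2 V → ℝ} (hf : G.IsFracMatching f) {z : V} {e : Sym2 V}
    (hz : Wt G f z = 0) (he : e ∈ G.incidenceFinset z) : f e = 0 := by
  have h1 := single_le_Wt (fun e => (hf.1 e).1) he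
  have h2 := (hf.1 e).1
  rw [hz] at h1
  linarith

lemma induced_part {g : Sym2 V → ℝ} (hg : G.IsFracMatching g)
    (hint : ∀ v, Wt G g v = 0 ∨ Wt G g v = 1) (V₁ : Finset V)
    (hV₁ : ∀ v, v ∈ V₁ ↔ Wt G g v = 1) :
    ∃ f, (G.induce (V₁ : Set V)).IsFracMatching f ∧
      (G.induce (V₁ : Set V)).fracWeight f = (V₁.card : ℝ) / 2 := by
  classical
  set H := G.induce (V₁ : Set V) with hH
  set f' : Sym2 ↥(V₁ : Set V) → ℝ := fun e => g (e.map Subtype.val) with hf'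
  have gnn : ∀ e, 0 ≤ g e := fun e => (hg.1 e).1
  have hadj_iff : ∀ p q : ↥(V₁ : Set V), H.Adj p q ↔ G.Adj ↑p ↑q := fun p q => Iff.rfl
  have hinj : Function.Injective (Sym2.map (Subtype.val : ↥(V₁ : Set V) → V)) :=
    Sym2.map.injective Subtype.val_injective
  -- key: vertex weights transfer
  have key : ∀ a : ↥(V₁ : Set V), Wt H f' a = Wt G g ↑a := by
    intro a
    have h1 : Wt H f' a = ∑ e ∈ (H.incidenceFinset a).image (Sym2.map Subtype.val), g e := by
      rw [Wt, Finset.sum_image (fun e _ e' _ h => hinj h)]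
      exact Finset.sum_congr rfl (fun _ _ => rfl)
    rw [h1, Wt]
    apply Finset.sum_subset
    · intro e he
      obtain ⟨e₀, he₀, rfl⟩ := Finset.mem_image.1 he
      rw [mem_inc_gen] at he₀
      apply (mem_inc_gen G).2
      obtain ⟨p, q⟩ := e₀
      obtain ⟨hEdge, hMem⟩ := he₀
      have hGadj : G.Adj ↑p ↑q := (hadj_iff p q).1 hEdge
      rw [Sym2.map_pair_eq]
      refine ⟨hGadj, ?_⟩
      rcases Sym2.mem_iff.1 hMem with h | h
      · subst h; simp
      · subst h; simp
    · intro e he hnotmem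
      rw [mem_inc_gen] at he
      obtain ⟨hEdge, hMem⟩ := he
      obtain ⟨z, rfl⟩ := Sym2.mem_iff_exists.1 hMem
      have hGadj : G.Adj ↑a z := hEdge
      by_cases hz : z ∈ V₁
      · exfalso
        apply hnotmem
        refine Finset.mem_image.2 ⟨s(a, (⟨z, hz⟩ : ↥(V₁ : Set V))), ?_, ?_⟩
        · exact (mem_inc_gen H).2 ⟨(hadj_iff a ⟨z, hz⟩).2 hGadj, by simp⟩
        · rw [Sym2.map_pair_eq]
      · have hz0 : Wt G g z = 0 := by
          rcases hint z with h | h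
          · exact h
          · exact absurd ((hV₁ z).2 h) hz
        apply weight_zero_edge hg hz0
        rw [mem_inc_gen]
        exact ⟨hEdge, by simp⟩
  have hwt1 : ∀ a : ↥(V₁ : Set V), Wt H f' a = 1 := by
    intro a
    rw [key]
    exact (hV₁ ↑a).1 a.2
  have hoff : ∀ e, e ∉ H.edgeSet → f' e = 0 := by
    intro e he
    obtain ⟨p, q⟩ := e
    have : ¬ G.Adj ↑p ↑q := fun h => he ((hadj_iff p q).2 h)
    rw [hf']
    simp only [Sym2.map_pair_eq]
    exact hg.2.1 _ this
  have hfm : H.IsFracMatching f' := by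
    refine ⟨fun e => ⟨?_, ?_⟩, hoff, fun a => ?_⟩
    · exact gnn _
    · exact (hg.1 _).2
    · exact le_of_eq (hwt1 a)
  refine ⟨f', hfm, ?_⟩
  have hsupp' : ∀ e, f' e ≠ 0 → e ∈ H.edgeSet := by
    intro e he
    by_contra h
    exact he (hoff e h)
  have hdc := sum_Wt_eq (G := H) (f := f') hsupp'
  rw [sum_univ_eq_fracWeight hsupp'] at hdc
  have hcount : ∑ a : ↥(V₁ : Set V), Wt H f' a = (V₁.card : ℝ) := by
    rw [Finset.sum_congr rfl (fun a _ => hwt1 a), Finset.sum_const, nsmul_eq_mul, mul_one]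
    norm_cast
    rw [Finset.card_univ]
    exact Fintype.card_congr (Equiv.subtypeEquivRight (fun x => Finset.mem_coe)) |>.trans
      (Fintype.card_coe V₁)
  rw [hcount] at hdc
  linarith

end FracAux

end

open FracAux in
theorem stmt_3 {V : Type*} [Fintype V] (G : SimpleGraph V) :
    ∃ V₁ : Finset V, (V₁.card : ℝ) = 2 * G.fracNu ∧
      (∃ f, (G.induce (V₁ : Set V)).IsFracMatching f ∧
        (G.induce (V₁ : Set V)).fracWeight f = (V₁.card : ℝ) / 2) ∧
      ∀ u v : V, u ∉ V₁ → v ∉ V₁ → ¬ G.Adj u v := by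
  classical
  have h0fm : G.IsFracMatching (fun _ => 0) := by
    refine ⟨fun e => by norm_num, fun e _ => rfl, fun v => by simp⟩
  have h0w : G.fracWeight (fun _ => 0) = 0 := by simp [SimpleGraph.fracWeight]
  have h0int : ∀ v : V, Wt G (fun _ => 0) v = 0 ∨ Wt G (fun _ => 0) v = 1 :=
    fun v => Or.inl (by simp [Wt])
  set M := {x : ℝ | ∃ f, G.IsFracMatching f ∧ G.fracWeight f = x} with hM
  set N : Finset ℝ := (Finset.range (Fintype.card V + 1)).image (fun k : ℕ => (k : ℝ) / 2) with hN
  set Mi := {x : ℝ | ∃ g, G.IsFracMatching g ∧ G.fracWeight g = x ∧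
    ∀ v, Wt G g v = 0 ∨ Wt G g v = 1} with hMi
  have hMiN : ∀ x ∈ Mi, x ∈ N := by
    rintro x ⟨g, hg, rfl, hint⟩
    have h := integral_weight hg hint
    have hle : (Finset.univ.filter fun v => Wt G g v = 1).card ≤ Fintype.card V := by
      rw [← Finset.card_univ]
      exact Finset.card_le_card (Finset.filter_subset _ _)
    have hx : G.fracWeight g = ((Finset.univ.filter fun v => Wt G g v = 1).card : ℝ) / 2 := by
      linarith [h]
    rw [hN, hx]
    refine Finset.mem_image_of_mem (fun k : ℕ => (k : ℝ) / 2) (Finset.mem_range.2 ?_)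
    omega
  set F := N.filter (· ∈ Mi) with hF
  have h0Mi : (0:ℝ) ∈ Mi := ⟨fun _ => 0, h0fm, h0w, h0int⟩
  have h0F : (0:ℝ) ∈ F := Finset.mem_filter.2 ⟨hMiN 0 h0Mi, h0Mi⟩
  have hFne : F.Nonempty := ⟨0, h0F⟩
  set m := F.max' hFne with hm
  have hmMi : m ∈ Mi := (Finset.mem_filter.1 (F.max'_mem hFne)).2
  have hub : ∀ x ∈ M, x ≤ m := by
    rintro x ⟨f, hf, rfl⟩
    obtain ⟨g, hg, hle, hint⟩ := exists_integral hf
    have hmem : G.fracWeight g ∈ F :=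
      Finset.mem_filter.2 ⟨hMiN _ ⟨g, hg, rfl, hint⟩, ⟨g, hg, rfl, hint⟩⟩
    exact le_trans hle (F.le_max' _ hmem)
  have hmM : m ∈ M := by
    obtain ⟨g, hg, hw, _⟩ := hmMi
    exact ⟨g, hg, hw⟩
  have hnu : G.fracNu = m := by
    rw [SimpleGraph.fracNu]
    exact le_antisymm (csSup_le ⟨0, ⟨fun _ => 0, h0fm, h0w⟩⟩ hub) (le_csSup ⟨m, hub⟩ hmM)
  obtain ⟨g, hg, hgw, hint⟩ := hmMi
  set V₁ := Finset.univ.filter (fun v => Wt G g v = 1) with hV₁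
  have hV₁iff : ∀ v, v ∈ V₁ ↔ Wt G g v = 1 := fun v => by
    rw [hV₁]
    simp
  have hcard : (V₁.card : ℝ) = 2 * m := by
    have h := integral_weight hg hint
    rw [hgw, ← hV₁] at h
    exact h.symm
  refine ⟨V₁, by rw [hcard, hnu], induced_part hg hint V₁ hV₁iff, ?_⟩
  intro a b ha hb hadj
  have hwa : Wt G g a = 0 := (hint a).resolve_right (fun h => ha ((hV₁iff a).2 h))
  have hwb : Wt G g b = 0 := (hint b).resolve_right (fun h => hb ((hV₁iff b).2 h))
  have hedge : s(a, b) ∈ G.edgeSet := hadj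
  have hg0 : g s(a, b) = 0 :=
    weight_zero_edge hg hwa ((mem_inc G).2 ⟨hedge, by simp⟩)
  set g' := comb g g 1 0 (1/2) s(a, b) with hg'
  have hWg' : ∀ z, Wt G g' z = Wt G g z + (if z ∈ s(a, b) then (1:ℝ)/2 else 0) := by
    intro z
    rw [hg', Wt_comb G _ _ _ _ _ hedge]
    ring
  have gnn : ∀ e, 0 ≤ g e := fun e => (hg.1 e).1
  have hfm' : G.IsFracMatching g' := by
    refine ⟨fun e => ⟨?_, ?_⟩, ?_, ?_⟩
    · by_cases h : e = s(a, b)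
      · subst h
        simp [hg', comb, hg0]
      · have := gnn e
        simp [hg', comb, h]
        linarith
    · by_cases h : e = s(a, b)
      · subst h
        simp [hg', comb, hg0]
        norm_num
      · have := (hg.1 e).2
        simp [hg', comb, h]
        linarith
    · intro e he
      have hne : e ≠ s(a, b) := fun h => he (h ▸ hedge)
      have := hg.2.1 e he
      simp [hg', comb, hne, this]
    · intro v
      have h1 : Wt G g' v ≤ 1 := by
        rw [hWg']
        by_cases h : v ∈ s(a, b)
        · rcases mem_pair.1 h with h' | h' <;> subst h' <;> simp [h, hwa, hwb]
          all_goals norm_num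
        · simp [h]
          exact hg.2.2 v
      exact h1
  have hw' : G.fracWeight g' = m + 1/2 := by
    have hsupp : ∀ e, g' e ≠ 0 → e ∈ G.edgeSet := by
      intro e he
      by_cases h : e = s(a, b)
      · exact h ▸ hedge
      · apply pos_mem_edgeSet hg
        intro h0
        apply he
        simp [hg', comb, h, h0]
    rw [← sum_univ_eq_fracWeight hsupp, hg', sum_comb,
      sum_univ_eq_fracWeight (fun e he => pos_mem_edgeSet hg he), hgw]
    ring
  have hcontra : m + 1/2 ≤ m := hub _ ⟨g', hfm', hw'⟩
  linarith
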